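/- Let A and B be bounded operators (e.g., square complex matrices) and t ≥ 0. Then the spectral-norm distance between the first-order Lie–Trotter formula and the exact evolution satisfies ‖e^{-itB} e^{-itA} − e^{-it(A+B)}‖ ≤ (t²/2)·‖[A,B]‖, where [A,B] = AB − BA. -/

import Mathlib

open NormedSpace Set

set_option maxHeartbeats 2000000

section TrotterAux

variable {𝔸 : Type*} [NormedRing 𝔸] [NormedAlgebra ℝ 𝔸] [CompleteSpace 𝔸]

private lemma trotter_aux_deriv_rev (X : 𝔸) (s u : ℝ) :
    HasDerivAt (fun u : ℝ => exp ((s - u) • X)) (-(X * exp ((s - u) • X))) u := by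
  have h := (hasDerivAt_exp_smul_const' X (s - u)).scomp u ((hasDerivAt_id u).const_sub s)
  simpa [Function.comp_def] using h

private lemma trotter_aux_deriv2 (X Y : 𝔸) (s u : ℝ) :
    HasDerivAt (fun u : ℝ => exp (u • X) * (Y * exp ((s - u) • X)))
      (exp (u • X) * ((X * Y - Y * X) * exp ((s - u) • X))) u := by
  have h := (hasDerivAt_exp_smul_const X u).mul ((trotter_aux_deriv_rev X s u).const_mul Y)
  convert h using 1
  · rfl
  change _ = exp (u • X) * X * (Y * exp ((s - u) • X)) + exp (u • X) * (Y * -(X * exp ((s - u) • X)))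
  noncomm_ring

omit [CompleteSpace 𝔸] in
private lemma trotter_aux_exp_zero (X : 𝔸) : exp ((0:ℝ) • X) = 1 := by
  rw [show ((0:ℝ) • X) = 0 from zero_smul ℝ X, exp_zero]

private lemma trotter_aux_comm_bound {X Y : 𝔸}
    (hnorm : ∀ (u v : ℝ) (M : 𝔸), ‖exp (u • X) * (M * exp (v • X))‖ = ‖M‖)
    (s : ℝ) (hs : 0 ≤ s) :
    ‖exp (s • X) * Y - Y * exp (s • X)‖ ≤ ‖X * Y - Y * X‖ * s := by
  have bound : ∀ u ∈ Ico (0:ℝ) s,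
      ‖exp (u • X) * ((X * Y - Y * X) * exp ((s - u) • X))‖ ≤ ‖X * Y - Y * X‖ :=
    fun u _ => le_of_eq (hnorm u (s - u) _)
  have h := norm_image_sub_le_of_norm_deriv_le_segment'
    (f := fun u : ℝ => exp (u • X) * (Y * exp ((s - u) • X)))
    (fun u _ => (trotter_aux_deriv2 X Y s u).hasDerivWithinAt) bound s (right_mem_Icc.2 hs)
  simp only [sub_self, trotter_aux_exp_zero, mul_one, one_mul, sub_zero] at h
  exact h

private lemma trotter_aux_deriv3 (X Y : 𝔸) (t s : ℝ) :
    HasDerivAt (fun u : ℝ => exp (u • Y) * exp (u • X) * exp ((t - u) • (X + Y)))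
      (exp (s • Y) * ((Y * exp (s • X) - exp (s • X) * Y) * exp ((t - s) • (X + Y)))) s := by
  have h := ((hasDerivAt_exp_smul_const Y s).mul (hasDerivAt_exp_smul_const X s)).mul
    (trotter_aux_deriv_rev (X + Y) t s)
  convert h using 1
  · rfl
  change _ = (exp (s • Y) * Y * exp (s • X) + exp (s • Y) * (exp (s • X) * X)) * exp ((t - s) • (X + Y)) +
    (exp (s • Y) * exp (s • X)) * -((X + Y) * exp ((t - s) • (X + Y)))
  noncomm_ring

/-- Abstract version of the Trotter error bound, with the unitarity facts as hypotheses. -/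
private lemma trotter_aux_main {X Y : 𝔸} {t : ℝ} (ht : 0 ≤ t)
    (hnX : ∀ (u v : ℝ) (M : 𝔸), ‖exp (u • X) * (M * exp (v • X))‖ = ‖M‖)
    (hnYZ : ∀ (u v : ℝ) (M : 𝔸), ‖exp (u • Y) * (M * exp (v • (X + Y)))‖ = ‖M‖) :
    ‖exp (t • Y) * exp (t • X) - exp (t • (X + Y))‖ ≤ t ^ 2 / 2 * ‖X * Y - Y * X‖ := by
  obtain ⟨c, hc⟩ : ∃ c, c = ‖X * Y - Y * X‖ := ⟨_, rfl⟩
  obtain ⟨Φ, hΦ⟩ : ∃ Φ : ℝ → 𝔸,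
      Φ = fun s => exp (s • Y) * exp (s • X) * exp ((t - s) • (X + Y)) := ⟨_, rfl⟩
  obtain ⟨D, hD⟩ : ∃ D : ℝ → 𝔸,
      D = fun s => exp (s • Y) * ((Y * exp (s • X) - exp (s • X) * Y)
        * exp ((t - s) • (X + Y))) := ⟨_, rfl⟩
  have hΦ' : ∀ s : ℝ, HasDerivAt (fun u => Φ u - Φ 0) (D s) s := by
    intro s
    rw [hΦ, hD]
    exact (trotter_aux_deriv3 X Y t s).sub_const _
  have hbound : ∀ s ∈ Ico 0 t, ‖D s‖ ≤ c * s := by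
    intro s hs
    rw [hD]
    simp only
    rw [hnYZ s (t - s) _, norm_sub_rev, hc]
    exact trotter_aux_comm_bound hnX s hs.1
  have hBder : ∀ x : ℝ, HasDerivAt (fun s : ℝ => c * (s ^ 2 / 2)) (c * x) x := by
    intro x
    have h := ((hasDerivAt_pow 2 x).div_const 2).const_mul c
    refine h.congr_deriv ?_
    norm_num
  have hc0 : (0:ℝ) ≤ c := hc ▸ norm_nonneg _
  have main := image_norm_le_of_norm_deriv_right_le_deriv_boundary
    (f := fun s => Φ s - Φ 0) (f' := D) (a := 0) (b := t)
    (fun x _ => (hΦ' x).continuousAt.continuousWithinAt)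
    (fun x _ => (hΦ' x).hasDerivWithinAt)
    (by simp [hc0]) hBder hbound (right_mem_Icc.2 ht)
  have hval : Φ t - Φ 0 = exp (t • Y) * exp (t • X) - exp (t • (X + Y)) := by
    rw [hΦ]
    simp only [sub_self, zero_sub, sub_zero, trotter_aux_exp_zero, mul_one, one_mul]
  rw [hval] at main
  calc ‖exp (t • Y) * exp (t • X) - exp (t • (X + Y))‖ ≤ c * (t ^ 2 / 2) := main
    _ = t ^ 2 / 2 * ‖X * Y - Y * X‖ := by rw [hc]; ring

end TrotterAux

theorem trotter_first_order_error {n : ℕ}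
    (A B : EuclideanSpace ℂ (Fin n) →L[ℂ] EuclideanSpace ℂ (Fin n))
    (hA : IsSelfAdjoint A) (hB : IsSelfAdjoint B) (t : ℝ) (ht : 0 ≤ t) :
    ‖exp ((-(Complex.I * t)) • B) * exp ((-(Complex.I * t)) • A)
        - exp ((-(Complex.I * t)) • (A + B))‖
      ≤ t ^ 2 / 2 * ‖A * B - B * A‖ := by
  -- real-smul to complex-smul conversion
  have hsm : ∀ (s : ℝ) (C : EuclideanSpace ℂ (Fin n) →L[ℂ] EuclideanSpace ℂ (Fin n)),
      s • ((-Complex.I) • C) = (-(Complex.I * s)) • C := by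
    intro s C
    rw [← algebraMap_smul ℂ s ((-Complex.I) • C), smul_smul, Complex.coe_algebraMap]
    ring_nf
  -- unitarity
  have hu : ∀ (C : EuclideanSpace ℂ (Fin n) →L[ℂ] EuclideanSpace ℂ (Fin n)),
      IsSelfAdjoint C → ∀ s : ℝ, exp (s • ((-Complex.I) • C)) ∈
        unitary (EuclideanSpace ℂ (Fin n) →L[ℂ] EuclideanSpace ℂ (Fin n)) := by
    intro C hC s
    rw [hsm]
    letI : NormedAlgebra ℚ (EuclideanSpace ℂ (Fin n) →L[ℂ] EuclideanSpace ℂ (Fin n)) := .restrictScalars ℚ ℂ _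
    apply exp_mem_unitary_of_mem_skewAdjoint
    exact hC.smul_mem_skewAdjoint (by rw [skewAdjoint.mem_iff]; simp [Complex.ext_iff])
  have hXY : (-Complex.I) • A + (-Complex.I) • B = (-Complex.I) • (A + B) := (smul_add _ _ _).symm
  have hnX : ∀ (u v : ℝ) (M : EuclideanSpace ℂ (Fin n) →L[ℂ] EuclideanSpace ℂ (Fin n)),
      ‖exp (u • ((-Complex.I) • A)) * (M * exp (v • ((-Complex.I) • A)))‖ = ‖M‖ := by
    intro u v M
    rw [CStarRing.norm_mem_unitary_mul _ (hu A hA u),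
      CStarRing.norm_mul_mem_unitary _ (hu A hA v)]
  have hnYZ : ∀ (u v : ℝ) (M : EuclideanSpace ℂ (Fin n) →L[ℂ] EuclideanSpace ℂ (Fin n)),
      ‖exp (u • ((-Complex.I) • B)) *
        (M * exp (v • ((-Complex.I) • A + (-Complex.I) • B)))‖ = ‖M‖ := by
    intro u v M
    rw [CStarRing.norm_mem_unitary_mul _ (hu B hB u),
      CStarRing.norm_mul_mem_unitary _ (by rw [hXY]; exact hu (A + B) (IsSelfAdjoint.add (R := EuclideanSpace ℂ (Fin n) →L[ℂ] EuclideanSpace ℂ (Fin n)) hA hB) v)]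
  have main := trotter_aux_main (X := (-Complex.I) • A) (Y := (-Complex.I) • B) ht hnX hnYZ
  -- identify the two sides
  have e1 : exp (t • ((-Complex.I) • A)) = exp ((-(Complex.I * t)) • A) := by
    rw [hsm]
  have e2 : exp (t • ((-Complex.I) • B)) = exp ((-(Complex.I * t)) • B) := by
    rw [hsm]
  have e3 : exp (t • ((-Complex.I) • A + (-Complex.I) • B))
      = exp ((-(Complex.I * t)) • (A + B)) := by
    rw [hXY, hsm]
  rw [e1, e2, e3] at main
  -- commutator norm identification
  have hcn : ‖((-Complex.I) • A) * ((-Complex.I) • B) - ((-Complex.I) • B) * ((-Complex.I) • A)‖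
      = ‖A * B - B * A‖ := by
    have h1 : ((-Complex.I) • A) * ((-Complex.I) • B) - ((-Complex.I) • B) * ((-Complex.I) • A)
        = ((-Complex.I) * (-Complex.I)) • (A * B - B * A) := by
      rw [smul_mul_smul_comm, smul_mul_smul_comm, smul_sub]
    have h2 : ((-Complex.I) * (-Complex.I)) = -1 := by simp [Complex.ext_iff]
    have h3 : ((-1:ℂ) • (A * B - B * A)) = -(A * B - B * A) := by module
    rw [h1, h2, h3, norm_neg]
  rw [hcn] at main
  exact main
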